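/- Let 0 < λ < 1 and 0 ≤ β < 1, and let u = λ + i√(λ − λ²), v = λ − i√(λ − λ²). Then for every integer s ≥ 2, the squared modulus | (1−β)/(u−v) · ( (u−1)u^s/(u−β) − (v−1)v^s/(v−β) ) |² is at most 5·λ^{s−2}. -/

import Mathlib

open Complex

lemma eta_quad_aux (lam β : ℝ) (hlam0 : 0 < lam) (hlam1 : lam < 1) :
    (1 - β) ^ 2 * lam ≤ 5 * ((lam - β) ^ 2 + (lam - lam ^ 2)) := by
  nlinarith [sq_nonneg ((5 - lam) * β - 4 * lam),
    mul_pos hlam0 (show (0:ℝ) < 1 - lam by linarith)]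

/-- With `u = λ + i√(λ-λ²)`, `v = λ - i√(λ-λ²)`, for every integer `s ≥ 2`,
`| (1-β)/(u-v) · ( (u-1)uˢ/(u-β) - (v-1)vˢ/(v-β) ) |² ≤ 5 λ^{s-2}`. -/
theorem eta_bound (lam β : ℝ) (hlam0 : 0 < lam) (hlam1 : lam < 1)
    (hβ0 : 0 ≤ β) (hβ1 : β < 1) (s : ℕ) (hs : 2 ≤ s) :
    let u : ℂ := (lam : ℂ) + (Real.sqrt (lam - lam ^ 2) : ℝ) * Complex.I
    let v : ℂ := (lam : ℂ) - (Real.sqrt (lam - lam ^ 2) : ℝ) * Complex.I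
    (‖((1 : ℂ) - (β : ℂ)) / (u - v) *
        ((u - 1) * u ^ s / (u - (β : ℂ)) - (v - 1) * v ^ s / (v - (β : ℂ)))‖) ^ 2 ≤
      5 * lam ^ (s - 2) := by
  intro u v
  have hll : 0 < lam - lam ^ 2 := by nlinarith
  set a := Real.sqrt (lam - lam ^ 2) with ha_def
  have ha2 : a ^ 2 = lam - lam ^ 2 := Real.sq_sqrt hll.le
  have ha : 0 < a := Real.sqrt_pos.mpr hll
  set D := (lam - β) ^ 2 + a ^ 2 with hD_def
  have hD : 0 < D := by positivity
  have hu1 : ‖u - 1‖ = Real.sqrt (1 - lam) := by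
    rw [Complex.norm_def]
    congr 1
    simp [u, Complex.normSq_apply]
    nlinarith
  have hv1 : ‖v - 1‖ = Real.sqrt (1 - lam) := by
    rw [Complex.norm_def]
    congr 1
    simp [v, Complex.normSq_apply]
    nlinarith
  have hu : ‖u‖ = Real.sqrt lam := by
    rw [Complex.norm_def]
    congr 1
    simp [u, Complex.normSq_apply]
    nlinarith
  have hv : ‖v‖ = Real.sqrt lam := by
    rw [Complex.norm_def]
    congr 1
    simp [v, Complex.normSq_apply]
    nlinarith
  have hub : ‖u - (β : ℂ)‖ = Real.sqrt D := by
    rw [Complex.norm_def]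
    congr 1
    simp [u, Complex.normSq_apply, hD_def]
    ring_nf
    rw [ha_def]
  have hvb : ‖v - (β : ℂ)‖ = Real.sqrt D := by
    rw [Complex.norm_def]
    congr 1
    simp [v, Complex.normSq_apply, hD_def]
    ring_nf
    rw [ha_def]
  have huv : ‖u - v‖ = 2 * a := by
    have : u - v = (2 * a : ℝ) * Complex.I := by
      simp [u, v]; push_cast; ring
    rw [this, norm_mul, Complex.norm_I, Complex.norm_real, Real.norm_eq_abs, mul_one,
      abs_of_pos (by positivity)]
  have h1b : ‖(1 : ℂ) - (β : ℂ)‖ = 1 - β := by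
    rw [show (1 : ℂ) - (β : ℂ) = ((1 - β : ℝ) : ℂ) by push_cast; ring]
    rw [Complex.norm_real, Real.norm_eq_abs, abs_of_pos (by linarith)]
  set B : ℝ := (1 - β) * Real.sqrt (1 - lam) * Real.sqrt lam ^ s / (a * Real.sqrt D)
    with hB_def
  have hT : ‖(u - 1) * u ^ s / (u - (β : ℂ))‖
      = Real.sqrt (1 - lam) * Real.sqrt lam ^ s / Real.sqrt D := by
    rw [norm_div, norm_mul, norm_pow, hu1, hu, hub]
  have hTv : ‖(v - 1) * v ^ s / (v - (β : ℂ))‖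
      = Real.sqrt (1 - lam) * Real.sqrt lam ^ s / Real.sqrt D := by
    rw [norm_div, norm_mul, norm_pow, hv1, hv, hvb]
  have hsD : 0 < Real.sqrt D := Real.sqrt_pos.mpr hD
  have key : ‖((1 : ℂ) - (β : ℂ)) / (u - v) *
      ((u - 1) * u ^ s / (u - (β : ℂ)) - (v - 1) * v ^ s / (v - (β : ℂ)))‖ ≤ B := by
    rw [norm_mul, norm_div, h1b, huv]
    have htri := norm_sub_le ((u - 1) * u ^ s / (u - (β : ℂ)))
      ((v - 1) * v ^ s / (v - (β : ℂ)))
    rw [hT, hTv] at htri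
    have h0 : 0 ≤ (1 - β) / (2 * a) := div_nonneg (by linarith) (by positivity)
    calc (1 - β) / (2 * a) * ‖(u - 1) * u ^ s / (u - (β : ℂ)) -
          (v - 1) * v ^ s / (v - (β : ℂ))‖
        ≤ (1 - β) / (2 * a) * (Real.sqrt (1 - lam) * Real.sqrt lam ^ s / Real.sqrt D +
          Real.sqrt (1 - lam) * Real.sqrt lam ^ s / Real.sqrt D) :=
          mul_le_mul_of_nonneg_left htri h0
      _ = B := by rw [hB_def]; field_simp; ring
  have hsq : (‖((1 : ℂ) - (β : ℂ)) / (u - v) *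
      ((u - 1) * u ^ s / (u - (β : ℂ)) - (v - 1) * v ^ s / (v - (β : ℂ)))‖) ^ 2 ≤ B ^ 2 :=
    pow_le_pow_left₀ (norm_nonneg _) key 2
  refine hsq.trans ?_
  have hB2 : B ^ 2 = (1 - β) ^ 2 * (1 - lam) * lam ^ s / (a ^ 2 * D) := by
    have hsl : Real.sqrt lam ^ (s * 2) = lam ^ s := by
      rw [mul_comm, pow_mul, Real.sq_sqrt hlam0.le]
    rw [hB_def, div_pow, mul_pow, mul_pow, mul_pow, ← pow_mul,
      Real.sq_sqrt (by linarith : (0:ℝ) ≤ 1 - lam), Real.sq_sqrt hD.le, hsl]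
  rw [hB2]
  rw [div_le_iff₀ (by positivity)]
  have hls : lam ^ s = lam ^ (s - 2) * lam ^ 2 := by
    rw [← pow_add]; congr 1; omega
  rw [hls, hD_def, ha2]
  have hfact := eta_quad_aux lam β hlam0 hlam1
  have hc : (0:ℝ) ≤ lam ^ (s - 2) * lam * (1 - lam) := by
    have h1l : (0:ℝ) < 1 - lam := by linarith
    positivity
  have hmul := mul_le_mul_of_nonneg_right hfact hc
  calc (1 - β) ^ 2 * (1 - lam) * (lam ^ (s - 2) * lam ^ 2)
      = (1 - β) ^ 2 * lam * (lam ^ (s - 2) * lam * (1 - lam)) := by ring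
    _ ≤ 5 * ((lam - β) ^ 2 + (lam - lam ^ 2)) * (lam ^ (s - 2) * lam * (1 - lam)) := hmul
    _ = 5 * lam ^ (s - 2) * ((lam - lam ^ 2) * ((lam - β) ^ 2 + (lam - lam ^ 2))) := by ring
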